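/- Let V : ℝ³ → ℝ be continuous with V(λx) = λ^s V(x) for all λ > 0 and some s > 2, and V(x) > 0 for |x| = 1, and let W(x) = V(x) − (1/4) r(x)². Then W attains its infimum on ℝ³ and inf_{ℝ³} W < 0. -/

import Mathlib

open MeasureTheory Filter Topology

noncomputable section

/-- Three-dimensional Euclidean space. -/
abbrev E3 := EuclideanSpace ℝ (Fin 3)

/-- The distance `r(x) = √(x₁² + x₂²)` from `x` to the `x₃`-axis. -/
def rax (x : E3) : ℝ := Real.sqrt (x 0 ^ 2 + x 1 ^ 2)

/-- The integrand of the 3D Thomas–Fermi functional: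
`V ρ − (Ω²/4) r² ρ + g ρ²`. -/
def tfIntegrand (V : E3 → ℝ) (g Ω : ℝ) (ρ : E3 → ℝ) (x : E3) : ℝ :=
  V x * ρ x - Ω ^ 2 / 4 * rax x ^ 2 * ρ x + g * ρ x ^ 2

/-- Admissible densities for the 3D Thomas–Fermi problem: measurable, nonnegative,
in `L¹ ∩ L²`, with finite potential terms and unit mass. -/
def tfAdmissible (V : E3 → ℝ) (ρ : E3 → ℝ) : Prop :=
  Measurable ρ ∧ (∀ x, 0 ≤ ρ x) ∧ Integrable ρ ∧ Integrable (fun x => ρ x ^ 2) ∧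
    Integrable (fun x => V x * ρ x) ∧ Integrable (fun x => rax x ^ 2 * ρ x) ∧
    (∫ x, ρ x) = 1

/-- The 3D Thomas–Fermi energy `E^TF_{g,Ω}`. -/
def ETF (V : E3 → ℝ) (g Ω : ℝ) : ℝ :=
  sInf { e | ∃ ρ : E3 → ℝ, tfAdmissible V ρ ∧ e = ∫ x, tfIntegrand V g Ω ρ x }

/-- The candidate Thomas–Fermi minimizer with chemical potential `μ`:
`ρ^TF_{g,Ω}(x) = (1/(2g)) [μ + (Ω²/4) r(x)² − V(x)]₊`. -/
def rhoTF (V : E3 → ℝ) (g Ω μ : ℝ) (x : E3) : ℝ :=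
  1 / (2 * g) * max (μ + Ω ^ 2 / 4 * rax x ^ 2 - V x) 0

/-- Homogeneity of degree `s`: `V(λx) = λ^s V(x)` for all `λ > 0`. -/
def Homogeneous (V : E3 → ℝ) (s : ℝ) : Prop :=
  ∀ lam : ℝ, 0 < lam → ∀ x : E3, V (lam • x) = lam ^ s * V x

/-- The effective potential `W(x) = V(x) − (1/4) r(x)²`. -/
def Wpot (V : E3 → ℝ) (x : E3) : ℝ := V x - 1 / 4 * rax x ^ 2

/-- **The effective potential `W = V − r²/4` attains its infimum, and the infimum is
strictly negative.** -/
theorem Wpot_attains_neg_inf (V : E3 → ℝ) (hVc : Continuous V)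
    (s : ℝ) (hs : 2 < s) (hhom : Homogeneous V s)
    (hVpos : ∀ x : E3, ‖x‖ = 1 → 0 < V x) :
    ∃ x₀ : E3, (∀ x : E3, Wpot V x₀ ≤ Wpot V x) ∧ Wpot V x₀ < 0 := by
  have hs2 : (0:ℝ) < s - 2 := by linarith
  -- continuity of W
  have hrc : Continuous rax := by unfold rax; fun_prop
  have hWc : Continuous (Wpot V) := by
    unfold Wpot; fun_prop
  -- rax ≤ norm
  have hrle : ∀ x : E3, rax x ≤ ‖x‖ := by
    intro x
    have hn : ‖x‖ = Real.sqrt (∑ i, x i ^ 2) := by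
      rw [EuclideanSpace.norm_eq]; simp only [Real.norm_eq_abs, sq_abs]
    rw [rax, hn, Fin.sum_univ_three]
    exact Real.sqrt_le_sqrt (by nlinarith [sq_nonneg (x 2)])
  have hrnn : ∀ x : E3, 0 ≤ rax x := fun x => Real.sqrt_nonneg _
  -- min of V on the sphere
  have hsph : IsCompact (Metric.sphere (0:E3) 1) := isCompact_sphere 0 1
  set e0 : E3 := EuclideanSpace.single 0 1 with he0
  have hne0 : ‖e0‖ = 1 := by simp [he0, EuclideanSpace.norm_single]
  have hre0 : rax e0 = 1 := by simp [rax, he0, EuclideanSpace.single_apply]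
  have hsne : (Metric.sphere (0:E3) 1).Nonempty := ⟨e0, by simp [hne0]⟩
  obtain ⟨z, hz, hzmin⟩ := hsph.exists_isMinOn hsne hVc.continuousOn
  have hznorm : ‖z‖ = 1 := by simpa using hz
  set c : ℝ := V z with hc
  have hcpos : 0 < c := hVpos z hznorm
  -- lower bound for V
  have hVlow : ∀ x : E3, x ≠ 0 → c * ‖x‖ ^ s ≤ V x := by
    intro x hx
    have hnx : 0 < ‖x‖ := norm_pos_iff.mpr hx
    set u : E3 := ‖x‖⁻¹ • x with hu
    have hun : ‖u‖ = 1 := by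
      rw [hu, norm_smul, norm_inv, norm_norm, inv_mul_cancel₀ hnx.ne']
    have hxu : x = ‖x‖ • u := by
      rw [hu, smul_smul, mul_inv_cancel₀ hnx.ne', one_smul]
    have := hhom ‖x‖ hnx u
    rw [← hxu] at this
    rw [this]
    have : c ≤ V u := hzmin (by simp [hun])
    have hp : 0 ≤ ‖x‖ ^ s := Real.rpow_nonneg hnx.le s
    nlinarith
  -- the negative point: lam • e0
  set a : ℝ := (1 / (8 * V e0)) ^ (1 / (s - 2)) with ha
  have hVe0 : 0 < V e0 := hVpos e0 hne0
  have hapos : 0 < a := Real.rpow_pos_of_pos (by positivity) _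
  set lam : ℝ := min 1 a with hlam
  have hlampos : 0 < lam := lt_min one_pos hapos
  have hlam1 : lam ≤ 1 := min_le_left _ _
  have hlams : lam ^ (s - 2) ≤ 1 / (8 * V e0) := by
    calc lam ^ (s - 2) ≤ a ^ (s - 2) :=
          Real.rpow_le_rpow hlampos.le (min_le_right _ _) hs2.le
      _ = 1 / (8 * V e0) := by
          rw [ha, ← Real.rpow_mul (by positivity), one_div (s-2), inv_mul_cancel₀ hs2.ne',
            Real.rpow_one]
  have hrlam : rax (lam • e0) = lam := by
    simp [rax, he0, EuclideanSpace.single_apply, PiLp.smul_apply, Real.sqrt_sq_eq_abs,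
      abs_of_nonneg hlampos.le]
  have hlamsplit : lam ^ s = lam ^ (2:ℕ) * lam ^ (s - 2) := by
    rw [← Real.rpow_natCast lam 2, ← Real.rpow_add hlampos]; norm_num
  have hWneg : Wpot V (lam • e0) < 0 := by
    have hVl : V (lam • e0) = lam ^ s * V e0 := hhom lam hlampos e0
    have h1 : lam ^ (s - 2) * V e0 ≤ 1 / 8 := by
      calc lam ^ (s-2) * V e0 ≤ 1 / (8 * V e0) * V e0 :=
            mul_le_mul_of_nonneg_right hlams hVe0.le
        _ = 1/8 := by field_simp
    have hsq : 0 < lam ^ (2:ℕ) := by positivity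
    rw [Wpot, hVl, hrlam, hlamsplit]
    nlinarith
  -- the radius
  set b : ℝ := (1 / (4 * c)) ^ (1 / (s - 2)) with hb
  set R : ℝ := max 1 b with hR
  have hR1 : (1:ℝ) ≤ R := le_max_left _ _
  have hRpos : 0 < R := lt_of_lt_of_le one_pos hR1
  have hbs : b ^ (s - 2) = 1 / (4 * c) := by
    rw [hb, ← Real.rpow_mul (by positivity), one_div (s-2), inv_mul_cancel₀ hs2.ne',
      Real.rpow_one]
  have houter : ∀ x : E3, R ≤ ‖x‖ → 0 ≤ Wpot V x := by
    intro x hx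
    have hnx : 0 < ‖x‖ := lt_of_lt_of_le hRpos hx
    have hxne : x ≠ 0 := by
      intro h; rw [h, norm_zero] at hnx; exact lt_irrefl 0 hnx
    have hV : c * ‖x‖ ^ s ≤ V x := hVlow x hxne
    have hbR : b ≤ ‖x‖ := le_trans (le_max_right 1 b) hx
    have hbnn : 0 ≤ b := Real.rpow_nonneg (by positivity) _
    have hmono : b ^ (s-2) ≤ ‖x‖ ^ (s-2) := Real.rpow_le_rpow hbnn hbR hs2.le
    rw [hbs] at hmono
    have hxsplit : ‖x‖ ^ s = ‖x‖ ^ (2:ℕ) * ‖x‖ ^ (s - 2) := by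
      rw [← Real.rpow_natCast ‖x‖ 2, ← Real.rpow_add hnx]; norm_num
    have hrx : rax x ^ 2 ≤ ‖x‖ ^ 2 := by
      have := hrle x
      nlinarith [hrnn x]
    rw [Wpot]
    rw [hxsplit] at hV
    set t : ℝ := ‖x‖ ^ (s - 2) with htdef
    have hc14 : 1 / 4 ≤ c * t := by
      calc 1/4 = c * (1/(4*c)) := by field_simp
        _ ≤ c * t := mul_le_mul_of_nonneg_left hmono hcpos.le
    have h5 : 1/4 * ‖x‖^2 ≤ c * t * ‖x‖^2 :=
      mul_le_mul_of_nonneg_right hc14 (sq_nonneg ‖x‖)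
    rw [show ‖x‖^2 * t = t * ‖x‖^2 from mul_comm _ _, ← mul_assoc] at hV
    linarith
  -- minimize on the closed ball
  obtain ⟨x₀, hx₀B, hmin⟩ := (isCompact_closedBall (0:E3) R).exists_isMinOn
    ⟨0, by simp [hRpos.le]⟩ hWc.continuousOn
  have hlamball : lam • e0 ∈ Metric.closedBall (0:E3) R := by
    simp only [Metric.mem_closedBall, dist_zero_right, norm_smul, hne0,
      Real.norm_eq_abs, mul_one, abs_of_nonneg hlampos.le]
    exact le_trans hlam1 hR1
  have hx₀neg : Wpot V x₀ < 0 := lt_of_le_of_lt (hmin hlamball) hWneg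
  refine ⟨x₀, fun x => ?_, hx₀neg⟩
  by_cases hxR : ‖x‖ ≤ R
  · exact hmin (by simpa [Metric.mem_closedBall, dist_zero_right] using hxR)
  · exact le_trans hx₀neg.le (houter x (le_of_not_ge hxR))
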